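/- Let K ≥ 1, d ≥ 0 and C ∈ ℝ, and let μ be a finite Borel measure on the interval [0, K] with total mass μ([0,K]) ≤ d, such that ∫_{(0,K]} ln(t) dμ(t) ≥ −C (in particular this integral is not −∞). Then for every λ with 0 < λ < K, μ((0, λ]) ≤ (C + d·ln K) / (−ln(λ/K)). -/

import Mathlib

open MeasureTheory

/-- Let `μ` be a finite Borel measure on `[0, K]` (with `K ≥ 1`) of total
mass at most `d`, whose logarithmic moment satisfies `∫_{(0,K]} ln t dμ(t) ≥ −C`.  Then for
every `0 < λ < K` one has `μ((0, λ]) ≤ (C + d ln K) / (− ln(λ/K))`. -/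
theorem spectral_density_estimate_of_det_bound
    (K d C : ℝ) (hK : 1 ≤ K) (hd : 0 ≤ d)
    (μ : Measure ℝ) [IsFiniteMeasure μ]
    (hsupp : μ (Set.Icc 0 K)ᶜ = 0)
    (hmass : μ Set.univ ≤ ENNReal.ofReal d)
    (hint : IntegrableOn Real.log (Set.Ioc 0 K) μ)
    (hdet : -C ≤ ∫ t in Set.Ioc 0 K, Real.log t ∂μ)
    (lam : ℝ) (hlam0 : 0 < lam) (hlamK : lam < K) :
    (μ (Set.Ioc 0 lam)).toReal ≤ (C + d * Real.log K) / (-Real.log (lam / K)) := by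
  have hKpos : (0:ℝ) < K := lt_of_lt_of_le one_pos hK
  set m1 : ℝ := (μ (Set.Ioc 0 lam)).toReal with hm1
  set m2 : ℝ := (μ (Set.Ioc lam K)).toReal with hm2
  have hne : ∀ s : Set ℝ, μ s ≠ ⊤ := fun s => measure_ne_top μ s
  have hm1nn : 0 ≤ m1 := ENNReal.toReal_nonneg
  have hm2nn : 0 ≤ m2 := ENNReal.toReal_nonneg
  -- disjoint union
  have hdisj : Disjoint (Set.Ioc 0 lam) (Set.Ioc lam K) := Set.Ioc_disjoint_Ioc_of_le le_rfl
  have hunion : Set.Ioc 0 lam ∪ Set.Ioc lam K = Set.Ioc 0 K :=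
    Set.Ioc_union_Ioc_eq_Ioc (le_of_lt hlam0) (le_of_lt hlamK)
  have hmeas1 : MeasurableSet (Set.Ioc 0 lam) := measurableSet_Ioc
  have hmeas2 : MeasurableSet (Set.Ioc lam K) := measurableSet_Ioc
  have hmsum : m1 + m2 ≤ d := by
    have h1 : μ (Set.Ioc 0 K) = μ (Set.Ioc 0 lam) + μ (Set.Ioc lam K) := by
      rw [← hunion, measure_union hdisj hmeas2]
    have h2 : μ (Set.Ioc 0 K) ≤ ENNReal.ofReal d :=
      le_trans (measure_mono (Set.subset_univ _)) hmass
    rw [h1] at h2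
    have := ENNReal.toReal_le_of_le_ofReal hd h2
    rwa [ENNReal.toReal_add (hne _) (hne _)] at this
  -- split the integral
  have hint1 : IntegrableOn Real.log (Set.Ioc 0 lam) μ :=
    hint.mono_set (Set.Ioc_subset_Ioc le_rfl (le_of_lt hlamK))
  have hint2 : IntegrableOn Real.log (Set.Ioc lam K) μ :=
    hint.mono_set (Set.Ioc_subset_Ioc (le_of_lt hlam0) le_rfl)
  have hsplit : ∫ t in Set.Ioc 0 K, Real.log t ∂μ =
      (∫ t in Set.Ioc 0 lam, Real.log t ∂μ) + ∫ t in Set.Ioc lam K, Real.log t ∂μ := by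
    rw [← hunion, setIntegral_union hdisj hmeas2 hint1 hint2]
  -- bound each piece
  have hb1 : ∫ t in Set.Ioc 0 lam, Real.log t ∂μ ≤ m1 * Real.log lam := by
    have : ∫ t in Set.Ioc 0 lam, Real.log t ∂μ ≤ ∫ _ in Set.Ioc 0 lam, Real.log lam ∂μ := by
      apply setIntegral_mono_on hint1 (integrableOn_const (hne _)) hmeas1
      intro t ht
      exact Real.log_le_log ht.1 ht.2
    simpa [setIntegral_const, smul_eq_mul, measureReal_def] using this
  have hb2 : ∫ t in Set.Ioc lam K, Real.log t ∂μ ≤ m2 * Real.log K := by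
    have : ∫ t in Set.Ioc lam K, Real.log t ∂μ ≤ ∫ _ in Set.Ioc lam K, Real.log K ∂μ := by
      apply setIntegral_mono_on hint2 (integrableOn_const (hne _)) hmeas2
      intro t ht
      exact Real.log_le_log (lt_trans hlam0 ht.1) ht.2
    simpa [setIntegral_const, smul_eq_mul, measureReal_def] using this
  have hlogK : 0 ≤ Real.log K := Real.log_nonneg hK
  have hloglt : Real.log lam < Real.log K := Real.log_lt_log hlam0 hlamK
  have hkey : -C ≤ m1 * Real.log lam + m2 * Real.log K := by
    calc -C ≤ ∫ t in Set.Ioc 0 K, Real.log t ∂μ := hdet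
    _ = _ := hsplit
    _ ≤ m1 * Real.log lam + m2 * Real.log K := add_le_add hb1 hb2
  have hden : -Real.log (lam / K) = Real.log K - Real.log lam := by
    rw [Real.log_div (ne_of_gt hlam0) (ne_of_gt hKpos)]; ring
  rw [hden, le_div_iff₀ (by linarith)]
  nlinarith [mul_le_mul_of_nonneg_right hmsum hlogK]
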